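/- Define β^(s) := α − n·Σ_{i=1}^s (ε(w((i−1) mod m + 1)) − ε(w(m+i))) for 0 ≤ s ≤ T. Then β^(0) = α, β^(T) = β (the composition of the construction), and β^(s) ▷ β^(s+1) for all 0 ≤ s < T; consequently α ▷ β. -/

import Mathlib

/-- The rank function `r(α,i)` for a composition indexed by `1,…,N`. -/
def rnk (N : ℕ) (α : ℕ → ℕ) (i : ℕ) : ℕ :=
  ((Finset.Icc 1 N).filter fun j => α i < α j).card +
  ((Finset.Icc 1 i).filter fun j => α j = α i).card

/-- The length `ℓ(α)`: largest index with a nonzero part. -/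
def len (N : ℕ) (α : ℕ → ℕ) : ℕ :=
  ((Finset.Icc 1 N).filter fun j => α j ≠ 0).sup id

/-- The weight `|α| = Σ α_i`. -/
def wt (N : ℕ) (α : ℕ → ℕ) : ℕ := ∑ i ∈ Finset.Icc 1 N, α i

/-- The deformation `α̃_i = α_i - i·υ` with `υ = 1/(N+1)`. -/
def tilde (N : ℕ) (α : ℕ → ℕ) (i : ℕ) : ℚ := (α i : ℚ) - (i : ℚ) / ((N : ℚ) + 1)

/-- The leg-length `L(α;i,j)`. -/
def leg (N : ℕ) (α : ℕ → ℕ) (i j : ℕ) : ℕ :=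
  ((Finset.Icc 1 N).filter fun l => i < l ∧ j ≤ α l ∧ α l ≤ α i).card +
  ((Finset.Icc 1 N).filter fun l => l < i ∧ j ≤ α l + 1 ∧ α l + 1 ≤ α i).card

/-- The decreasing rearrangement `α⁺`: `α⁺_i = α_{w(i)}` where `w` inverts the rank. -/
def part (N : ℕ) (α : ℕ → ℕ) (i : ℕ) : ℕ :=
  ∑ j ∈ (Finset.Icc 1 N).filter (fun j => rnk N α j = i), α j

/-- Strict dominance order `α ≻ β`. -/
def sdom (N : ℕ) (α β : ℕ → ℕ) : Prop :=
  (∃ i ∈ Finset.Icc 1 N, α i ≠ β i) ∧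
  ∀ k, k ≤ N → ∑ j ∈ Finset.Icc 1 k, β j ≤ ∑ j ∈ Finset.Icc 1 k, α j

/-- The order `α ▷ β`. -/
def tri (N : ℕ) (α β : ℕ → ℕ) : Prop :=
  wt N α = wt N β ∧
  (sdom N (part N α) (part N β) ∨
    ((∀ i ∈ Finset.Icc 1 N, part N α i = part N β i) ∧ sdom N α β))

/-- `(α,β)` is a `(-n/m)`-critical pair. -/
def critical (N m n : ℕ) (α β : ℕ → ℕ) : Prop :=
  tri N α β ∧ ∀ i ∈ Finset.Icc 1 N,
    ((rnk N β i : ℤ) - (rnk N α i : ℤ)) * (n : ℤ) = (m : ℤ) * ((α i : ℤ) - (β i : ℤ))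


section RankLemmas
variable {N : ℕ} {γ : ℕ → ℕ}

open Finset

lemma rnk_ge_one {j : ℕ} (hj : j ∈ Icc 1 N) : 1 ≤ rnk N γ j := by
  have : j ∈ (Icc 1 j).filter fun l => γ l = γ j := by
    simp [mem_filter, mem_Icc, (mem_Icc.mp hj).1]
  have := card_pos.mpr ⟨j, this⟩
  unfold rnk; omega

lemma rnk_le_N {j : ℕ} (hj : j ∈ Icc 1 N) : rnk N γ j ≤ N := by
  classical
  have hsub : (Icc 1 j).filter (fun l => γ l = γ j) ⊆
      (Icc 1 N).filter (fun l => γ l = γ j) := by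
    intro l hl
    obtain ⟨hj1, hj2⟩ := mem_Icc.mp hj
    simp only [mem_filter, mem_Icc] at hl ⊢
    exact ⟨⟨hl.1.1, le_trans hl.1.2 hj2⟩, hl.2⟩
  have hdisj : Disjoint ((Icc 1 N).filter fun l => γ j < γ l)
      ((Icc 1 N).filter fun l => γ l = γ j) := by
    rw [disjoint_filter]
    intro x _ hx hx'
    omega
  calc rnk N γ j ≤ ((Icc 1 N).filter fun l => γ j < γ l).card +
        ((Icc 1 N).filter (fun l => γ l = γ j)).card := by
        unfold rnk; exact Nat.add_le_add_left (card_le_card hsub) _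
    _ = (((Icc 1 N).filter fun l => γ j < γ l) ∪
        ((Icc 1 N).filter fun l => γ l = γ j)).card := (card_union_of_disjoint hdisj).symm
    _ ≤ (Icc 1 N).card := card_le_card (union_subset (filter_subset _ _) (filter_subset _ _))
    _ = N := by simp

lemma rnk_mem {j : ℕ} (hj : j ∈ Icc 1 N) : rnk N γ j ∈ Icc 1 N :=
  mem_Icc.mpr ⟨rnk_ge_one hj, rnk_le_N hj⟩

lemma rnk_lt_of_val_lt {a b : ℕ} (ha : a ∈ Icc 1 N) (hb : b ∈ Icc 1 N)
    (h : γ a < γ b) : rnk N γ b < rnk N γ a := by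
  classical
  have hsub : (Icc 1 b).filter (fun l => γ l = γ b) ⊆
      (Icc 1 N).filter (fun l => γ l = γ b) := by
    intro l hl
    obtain ⟨hb1, hb2⟩ := mem_Icc.mp hb
    simp only [mem_filter, mem_Icc] at hl ⊢
    exact ⟨⟨hl.1.1, le_trans hl.1.2 hb2⟩, hl.2⟩
  have hdisj : Disjoint ((Icc 1 N).filter fun l => γ b < γ l)
      ((Icc 1 N).filter fun l => γ l = γ b) := by
    rw [disjoint_filter]; intro x _ hx hx'; omega
  have hunion : ((Icc 1 N).filter fun l => γ b < γ l) ∪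
      ((Icc 1 N).filter fun l => γ l = γ b) ⊆ (Icc 1 N).filter fun l => γ a < γ l := by
    intro l hl
    rcases mem_union.mp hl with hl | hl <;> simp only [mem_filter] at * <;>
      exact ⟨hl.1, by omega⟩
  have h1 : rnk N γ b ≤ ((Icc 1 N).filter fun l => γ a < γ l).card := by
    calc rnk N γ b ≤ ((Icc 1 N).filter fun l => γ b < γ l).card +
          ((Icc 1 N).filter (fun l => γ l = γ b)).card :=
        Nat.add_le_add_left (card_le_card hsub) _
      _ = _ := (card_union_of_disjoint hdisj).symm
      _ ≤ _ := card_le_card hunion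
  have h2 : 1 ≤ ((Icc 1 a).filter fun l => γ l = γ a).card := by
    apply card_pos.mpr ⟨a, _⟩
    simp [mem_filter, mem_Icc, (mem_Icc.mp ha).1]
  unfold rnk at h1 ⊢; omega

lemma rnk_lt_of_val_eq {a b : ℕ} (ha : 1 ≤ a) (hab : a < b) (hb : b ≤ N)
    (h : γ a = γ b) : rnk N γ a < rnk N γ b := by
  classical
  have hfirst : ((Icc 1 N).filter fun l => γ a < γ l) =
      ((Icc 1 N).filter fun l => γ b < γ l) := by rw [h]
  have hssub : (Icc 1 a).filter (fun l => γ l = γ a) ⊂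
      (Icc 1 b).filter (fun l => γ l = γ b) := by
    constructor
    · intro l hl
      simp only [mem_filter, mem_Icc] at *
      exact ⟨⟨hl.1.1, by omega⟩, by omega⟩
    · intro hcon
      have : b ∈ (Icc 1 b).filter (fun l => γ l = γ b) := by
        simp [mem_filter, mem_Icc]; omega
      have := hcon this
      simp only [mem_filter, mem_Icc] at this
      omega
  have := card_lt_card hssub
  unfold rnk
  rw [hfirst]
  omega

lemma rnk_injOn {a b : ℕ} (ha : a ∈ Icc 1 N) (hb : b ∈ Icc 1 N)
    (h : rnk N γ a = rnk N γ b) : a = b := by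
  by_contra hne
  obtain ⟨ha1, ha2⟩ := mem_Icc.mp ha
  obtain ⟨hb1, hb2⟩ := mem_Icc.mp hb
  rcases lt_trichotomy (γ a) (γ b) with hv | hv | hv
  · have := rnk_lt_of_val_lt ha hb hv; omega
  · rcases Nat.lt_or_ge a b with hab | hab
    · have := rnk_lt_of_val_eq ha1 hab hb2 hv; omega
    · have hab : b < a := by omega
      have := rnk_lt_of_val_eq hb1 hab ha2 hv.symm; omega
  · have := rnk_lt_of_val_lt hb ha hv; omega

lemma rnk_surjOn {i : ℕ} (hi : i ∈ Icc 1 N) : ∃ u ∈ Icc 1 N, rnk N γ u = i := by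
  classical
  have himg : (Icc 1 N).image (rnk N γ) = Icc 1 N := by
    apply eq_of_subset_of_card_le
    · intro x hx
      rcases mem_image.mp hx with ⟨j, hj, rfl⟩
      exact rnk_mem hj
    · rw [card_image_of_injOn fun a ha b hb => rnk_injOn ha hb]
  rw [← himg] at hi
  rcases mem_image.mp hi with ⟨u, hu, h⟩
  exact ⟨u, hu, h⟩
end RankLemmas

def cntGe (N : ℕ) (γ : ℕ → ℕ) (v : ℕ) : ℕ :=
  ((Finset.Icc 1 N).filter fun l => v ≤ γ l).card

section PartLemmas
variable {N : ℕ} {γ δ : ℕ → ℕ}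
open Finset

lemma fiber_eq_singleton {u : ℕ} (hu : u ∈ Icc 1 N) :
    (Icc 1 N).filter (fun j => rnk N γ j = rnk N γ u) = {u} := by
  classical
  ext x
  simp only [mem_filter, mem_singleton]
  constructor
  · rintro ⟨hx, hr⟩; exact rnk_injOn hx hu hr
  · rintro rfl; exact ⟨hu, rfl⟩

lemma part_rnk {u : ℕ} (hu : u ∈ Icc 1 N) : part N γ (rnk N γ u) = γ u := by
  unfold part
  rw [fiber_eq_singleton hu, sum_singleton]

lemma cntGe_anti {v v' : ℕ} (h : v ≤ v') : cntGe N γ v' ≤ cntGe N γ v := by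
  apply card_le_card
  intro x hx
  simp only [mem_filter] at *
  exact ⟨hx.1, le_trans h hx.2⟩

lemma rnk_count_ub {u : ℕ} (hu : u ∈ Icc 1 N) : rnk N γ u ≤ cntGe N γ (γ u) := by
  classical
  have hsub : (Icc 1 u).filter (fun l => γ l = γ u) ⊆
      (Icc 1 N).filter (fun l => γ l = γ u) := by
    intro l hl
    obtain ⟨h1, h2⟩ := mem_Icc.mp hu
    simp only [mem_filter, mem_Icc] at hl ⊢
    exact ⟨⟨hl.1.1, le_trans hl.1.2 h2⟩, hl.2⟩
  have hdisj : Disjoint ((Icc 1 N).filter fun l => γ u < γ l)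
      ((Icc 1 N).filter fun l => γ l = γ u) := by
    rw [disjoint_filter]; intro x _ hx hx'; omega
  have hun : ((Icc 1 N).filter fun l => γ u < γ l) ∪
      ((Icc 1 N).filter fun l => γ l = γ u) ⊆ (Icc 1 N).filter fun l => γ u ≤ γ l := by
    intro l hl
    rcases mem_union.mp hl with hl | hl <;> simp only [mem_filter] at * <;>
      exact ⟨hl.1, by omega⟩
  have h1 := card_le_card hsub
  have h2 := card_union_of_disjoint hdisj
  have h3 := card_le_card hun
  unfold rnk cntGe
  omega

lemma rnk_count_lb {u : ℕ} (hu : u ∈ Icc 1 N) : cntGe N γ (γ u + 1) < rnk N γ u := by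
  have h2 : 1 ≤ ((Icc 1 u).filter fun l => γ l = γ u).card := by
    apply card_pos.mpr ⟨u, _⟩
    simp [mem_filter, mem_Icc, (mem_Icc.mp hu).1]
  have he : ((Icc 1 N).filter fun l => γ u + 1 ≤ γ l) =
      ((Icc 1 N).filter fun l => γ u < γ l) := rfl
  unfold rnk cntGe
  rw [he]
  omega

lemma part_eq_of_cntGe (h : ∀ v, cntGe N γ v = cntGe N δ v) {i : ℕ} (hi : i ∈ Icc 1 N) :
    part N γ i = part N δ i := by
  obtain ⟨u, hu, hru⟩ := rnk_surjOn (γ := γ) hi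
  obtain ⟨u', hu', hru'⟩ := rnk_surjOn (γ := δ) hi
  have pg : part N γ i = γ u := by rw [← hru]; exact part_rnk hu
  have pd : part N δ i = δ u' := by rw [← hru']; exact part_rnk hu'
  rw [pg, pd]
  by_contra hne
  have l1 : cntGe N γ (γ u + 1) < i := hru ▸ rnk_count_lb hu
  have u1 : i ≤ cntGe N γ (γ u) := hru ▸ rnk_count_ub hu
  have l2 : cntGe N γ (δ u' + 1) < i := by rw [h]; exact hru' ▸ rnk_count_lb hu'
  have u2 : i ≤ cntGe N γ (δ u') := by rw [h]; exact hru' ▸ rnk_count_ub hu'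
  rcases Nat.lt_or_ge (γ u) (δ u') with hvv | hvv
  · have := cntGe_anti (γ := γ) (N := N) (show γ u + 1 ≤ δ u' by omega)
    omega
  · have := cntGe_anti (γ := γ) (N := N) (show δ u' + 1 ≤ γ u by omega)
    omega

lemma cntGe_eq_card_part {v : ℕ} :
    ((Icc 1 N).filter fun i => v ≤ part N γ i).card = cntGe N γ v := by
  classical
  unfold cntGe
  symm
  apply card_bij (fun j _ => rnk N γ j)
  · intro j hj
    simp only [mem_filter] at hj ⊢
    exact ⟨rnk_mem hj.1, by rw [part_rnk hj.1]; exact hj.2⟩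
  · intro a ha b hb h
    simp only [mem_filter] at ha hb
    exact rnk_injOn ha.1 hb.1 h
  · intro i hi
    simp only [mem_filter] at hi
    obtain ⟨u, hu, hru⟩ := rnk_surjOn (γ := γ) hi.1
    have pg : part N γ i = γ u := by rw [← hru]; exact part_rnk hu
    refine ⟨u, ?_, hru⟩
    simp only [mem_filter]
    exact ⟨hu, by rw [← pg]; exact hi.2⟩

lemma cntGe_eq_of_part_eq (h : ∀ i ∈ Icc 1 N, part N γ i = part N δ i) (v : ℕ) :
    cntGe N γ v = cntGe N δ v := by
  classical
  rw [← cntGe_eq_card_part, ← cntGe_eq_card_part]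
  congr 1
  apply filter_congr
  intro i hi
  rw [h i hi]

lemma topsum_eq {p : ℕ} (hp : p ≤ N) :
    ∑ i ∈ Icc 1 p, part N γ i = ∑ j ∈ (Icc 1 N).filter (fun j => rnk N γ j ≤ p), γ j := by
  classical
  rw [← Finset.sum_fiberwise_of_maps_to (g := rnk N γ) (t := Icc 1 p) ?_ γ]
  · apply sum_congr rfl
    intro i hi
    unfold part
    congr 1
    rw [filter_filter]
    apply filter_congr
    intro j _
    simp only [mem_Icc] at hi
    constructor
    · exact fun hh => ⟨le_trans (le_of_eq hh) hi.2, hh⟩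
    · exact fun hh => hh.2
  · intro j hj
    simp only [mem_filter] at hj
    exact mem_Icc.mpr ⟨rnk_ge_one hj.1, hj.2⟩

lemma card_top {p : ℕ} (hp : p ≤ N) :
    ((Icc 1 N).filter fun j => rnk N γ j ≤ p).card = p := by
  classical
  have hc : ((Icc 1 N).filter fun j => rnk N γ j ≤ p).card = (Icc 1 p).card := by
    apply card_bij (fun j _ => rnk N γ j)
    · intro j hj
      simp only [mem_filter] at hj
      exact mem_Icc.mpr ⟨rnk_ge_one hj.1, hj.2⟩
    · intro a ha b hb h
      simp only [mem_filter] at ha hb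
      exact rnk_injOn ha.1 hb.1 h
    · intro i hi
      obtain ⟨hi1, hi2⟩ := mem_Icc.mp hi
      obtain ⟨u, hu, hru⟩ := rnk_surjOn (γ := γ) (mem_Icc.mpr ⟨hi1, le_trans hi2 hp⟩)
      exact ⟨u, by simp only [mem_filter]; exact ⟨hu, by omega⟩, hru⟩
  rw [hc]
  simp

lemma topsum_max {p : ℕ} (hp : p ≤ N) {S : Finset ℕ} (hS : S ⊆ Icc 1 N)
    (hcard : S.card = p) :
    ∑ j ∈ S, γ j ≤ ∑ j ∈ (Icc 1 N).filter (fun j => rnk N γ j ≤ p), γ j := by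
  classical
  set R := (Icc 1 N).filter (fun j => rnk N γ j ≤ p) with hR
  have hRsub : R ⊆ Icc 1 N := filter_subset _ _
  have hRcard : R.card = p := card_top hp
  have hval : ∀ x ∈ S \ R, ∀ y ∈ R, γ x ≤ γ y := by
    intro x hx y hy
    obtain ⟨hxS, hxR⟩ := mem_sdiff.mp hx
    have hxN : x ∈ Icc 1 N := hS hxS
    have hyN : y ∈ Icc 1 N := hRsub hy
    simp only [hR, mem_filter] at hxR hy
    by_contra hlt
    have h1 := rnk_lt_of_val_lt (γ := γ) hyN hxN (by omega)
    have h2 : rnk N γ x ≤ p := by omega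
    exact hxR ⟨hxN, h2⟩
  rcases (S \ R).eq_empty_or_nonempty with hemp | hne
  · have hsub : S ⊆ R := by
      intro x hx
      by_contra hxR
      have : x ∈ S \ R := mem_sdiff.mpr ⟨hx, hxR⟩
      simp [hemp] at this
    exact sum_le_sum_of_subset hsub
  · have hcards : (S \ R).card = (R \ S).card := by
      have h1 := card_inter_add_card_sdiff S R
      have h2 := card_inter_add_card_sdiff R S
      rw [inter_comm] at h2
      omega
    have hne' : (R \ S).Nonempty := by
      rw [← card_pos, ← hcards, card_pos]; exact hne
    obtain ⟨y₀, hy₀, hymin⟩ := exists_min_image (R \ S) γ hne'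
    have h1 : ∑ j ∈ S \ R, γ j ≤ (S \ R).card • γ y₀ := by
      apply sum_le_card_nsmul
      intro x hx
      exact hval x hx y₀ (mem_sdiff.mp hy₀).1
    have h2 : (R \ S).card • γ y₀ ≤ ∑ j ∈ R \ S, γ j := by
      apply card_nsmul_le_sum
      intro y hy
      exact hymin y hy
    have e1 : ∑ j ∈ S ∩ R, γ j + ∑ j ∈ S \ R, γ j = ∑ j ∈ S, γ j :=
      sum_inter_add_sum_sdiff S R γ
    have e2 : ∑ j ∈ R ∩ S, γ j + ∑ j ∈ R \ S, γ j = ∑ j ∈ R, γ j :=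
      sum_inter_add_sum_sdiff R S γ
    rw [inter_comm] at e2
    rw [hcards] at h1
    simp only [smul_eq_mul] at h1 h2
    omega
end PartLemmas

section MoveLemmas
variable {N : ℕ}
open Finset

lemma sum_move {γ δ : ℕ → ℕ} {a b n : ℕ} (hab : a ≠ b)
    (hda : δ a + n = γ a) (hdb : δ b = γ b + n)
    (hoth : ∀ l, l ≠ a → l ≠ b → δ l = γ l) (S : Finset ℕ) :
    ∑ j ∈ S, δ j + (if a ∈ S then n else 0) = ∑ j ∈ S, γ j + (if b ∈ S then n else 0) := by
  classical
  have hS' : ∀ f : ℕ → ℕ, ∑ j ∈ S, f j = ∑ j ∈ S ∩ {a, b}, f j + ∑ j ∈ S \ {a, b}, f j :=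
    fun f => (sum_inter_add_sum_sdiff S {a, b} f).symm
  have hcong : ∑ j ∈ S \ {a, b}, δ j = ∑ j ∈ S \ {a, b}, γ j := by
    apply sum_congr rfl
    intro x hx
    obtain ⟨_, hx2⟩ := mem_sdiff.mp hx
    simp only [mem_insert, mem_singleton] at hx2
    push_neg at hx2
    exact hoth x hx2.1 hx2.2
  rw [hS' δ, hS' γ, hcong]
  by_cases haS : a ∈ S <;> by_cases hbS : b ∈ S
  · have hint : S ∩ {a, b} = {a, b} := by
      apply inter_eq_right.mpr
      intro x hx
      simp only [mem_insert, mem_singleton] at hx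
      rcases hx with rfl | rfl <;> assumption
    rw [hint, sum_pair hab, sum_pair hab]
    simp only [haS, hbS, if_true]
    omega
  · have hint : S ∩ {a, b} = {a} := by
      ext x
      simp only [mem_inter, mem_insert, mem_singleton]
      constructor
      · rintro ⟨hx, rfl | rfl⟩
        · rfl
        · exact absurd hx hbS
      · rintro rfl; exact ⟨haS, Or.inl rfl⟩
    rw [hint, sum_singleton, sum_singleton]
    simp only [haS, hbS, if_true, if_false]
    omega
  · have hint : S ∩ {a, b} = {b} := by
      ext x
      simp only [mem_inter, mem_insert, mem_singleton]
      constructor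
      · rintro ⟨hx, rfl | rfl⟩
        · exact absurd hx haS
        · rfl
      · rintro rfl; exact ⟨hbS, Or.inr rfl⟩
    rw [hint, sum_singleton, sum_singleton]
    simp only [haS, hbS, if_true, if_false]
    omega
  · have hint : S ∩ {a, b} = ∅ := by
      ext x
      simp only [mem_inter, mem_insert, mem_singleton, notMem_empty, iff_false]
      rintro ⟨hx, rfl | rfl⟩
      · exact haS hx
      · exact hbS hx
    rw [hint]
    simp [haS, hbS]

lemma move_topsum_le {γ δ : ℕ → ℕ} {a b n p : ℕ} (ha : a ∈ Icc 1 N) (hb : b ∈ Icc 1 N)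
    (hab : a ≠ b) (hgap : γ b + n ≤ γ a) (hda : δ a + n = γ a) (hdb : δ b = γ b + n)
    (hoth : ∀ l, l ≠ a → l ≠ b → δ l = γ l) (hp : p ≤ N) :
    ∑ i ∈ Icc 1 p, part N δ i ≤ ∑ i ∈ Icc 1 p, part N γ i := by
  classical
  rw [topsum_eq hp, topsum_eq hp]
  set S := (Icc 1 N).filter (fun j => rnk N δ j ≤ p) with hSdef
  have hSsub : S ⊆ Icc 1 N := filter_subset _ _
  have hScard : S.card = p := card_top hp
  have hkey := sum_move hab hda hdb hoth S
  by_cases hbS : b ∈ S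
  · by_cases haS : a ∈ S
    · have heq : ∑ j ∈ S, δ j = ∑ j ∈ S, γ j := by
        simp only [haS, hbS, if_true] at hkey; omega
      rw [heq]
      exact topsum_max hp hSsub hScard
    · have hae : a ∉ S.erase b := fun h => haS (mem_of_mem_erase h)
      have hbcard : 1 ≤ S.card := card_pos.mpr ⟨b, hbS⟩
      have hS'card : (insert a (S.erase b)).card = p := by
        rw [card_insert_of_notMem hae, card_erase_of_mem hbS]
        omega
      have hsub' : insert a (S.erase b) ⊆ Icc 1 N :=
        insert_subset ha (subset_trans (erase_subset _ _) hSsub)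
      have e1 : ∑ j ∈ S.erase b, δ j + δ b = ∑ j ∈ S, δ j := sum_erase_add S δ hbS
      have e2 : ∑ j ∈ S.erase b, δ j = ∑ j ∈ S.erase b, γ j := by
        apply sum_congr rfl
        intro x hx
        exact hoth x (fun h => haS (h ▸ mem_of_mem_erase hx)) (ne_of_mem_erase hx)
      have e3 : ∑ j ∈ insert a (S.erase b), γ j = γ a + ∑ j ∈ S.erase b, γ j :=
        sum_insert hae
      have e4 := topsum_max (γ := γ) hp hsub' hS'card
      omega
  · have hle : ∑ j ∈ S, δ j ≤ ∑ j ∈ S, γ j := by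
      apply sum_le_sum
      intro x hx
      by_cases hxa : x = a
      · subst hxa; omega
      · rw [hoth x hxa (fun h => hbS (h ▸ hx))]
    exact le_trans hle (topsum_max hp hSsub hScard)

lemma cntGe_swap {γ δ : ℕ → ℕ} {a b : ℕ} (ha : a ∈ Icc 1 N) (hb : b ∈ Icc 1 N)
    (hda : δ a = γ b) (hdb : δ b = γ a)
    (hoth : ∀ l, l ≠ a → l ≠ b → δ l = γ l) (v : ℕ) :
    cntGe N δ v = cntGe N γ v := by
  classical
  unfold cntGe
  set f : ℕ → ℕ := fun x => if x = a then b else if x = b then a else x with hf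
  have hmem : ∀ x, x ∈ Icc 1 N → f x ∈ Icc 1 N := by
    intro x hx
    simp only [hf]
    split_ifs <;> assumption
  have hval : ∀ x, v ≤ δ x → v ≤ γ (f x) := by
    intro x hvx
    simp only [hf]
    split_ifs with h1 h2
    · subst h1; omega
    · subst h2; omega
    · rw [← hoth x h1 h2]; exact hvx
  have hval' : ∀ x, v ≤ γ x → v ≤ δ (f x) := by
    intro x hvx
    simp only [hf]
    split_ifs with h1 h2
    · subst h1; omega
    · subst h2; omega
    · rw [hoth x h1 h2]; exact hvx
  have hinv : ∀ x, f (f x) = x := by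
    intro x
    simp only [hf]
    split_ifs with h1 h2 <;> simp_all <;> split_ifs <;> simp_all
  apply card_bij' (fun x _ => f x) (fun x _ => f x)
  · intro x hx
    simp only [mem_filter] at hx ⊢
    exact ⟨hmem x hx.1, hval x hx.2⟩
  · intro x hx
    simp only [mem_filter] at hx ⊢
    exact ⟨hmem x hx.1, hval' x hx.2⟩
  · intro x _; exact hinv x
  · intro x _; exact hinv x
end MoveLemmas

section OrderLemmas
variable {N : ℕ}
open Finset

lemma cntGe_move_lt {γ δ : ℕ → ℕ} {a b n : ℕ} (ha : a ∈ Icc 1 N)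
    (hn : 1 ≤ n) (hgap : γ b + n < γ a) (hda : δ a + n = γ a) (hdb : δ b = γ b + n)
    (hoth : ∀ l, l ≠ a → l ≠ b → δ l = γ l) :
    cntGe N δ (γ a) < cntGe N γ (γ a) := by
  classical
  unfold cntGe
  have hset : (Icc 1 N).filter (fun l => γ a ≤ δ l) =
      ((Icc 1 N).filter (fun l => γ a ≤ γ l)).erase a := by
    ext x
    simp only [mem_erase, mem_filter]
    constructor
    · intro ⟨hx1, hx2⟩
      by_cases hxa : x = a
      · subst hxa; omega
      · by_cases hxb : x = b
        · subst hxb; omega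
        · rw [hoth x hxa hxb] at hx2; exact ⟨hxa, hx1, hx2⟩
    · intro ⟨hxa, hx1, hx2⟩
      by_cases hxb : x = b
      · subst hxb; omega
      · rw [← hoth x hxa hxb] at hx2; exact ⟨hx1, hx2⟩
  rw [hset]
  have hmem : a ∈ (Icc 1 N).filter (fun l => γ a ≤ γ l) := by
    simp only [mem_filter]; exact ⟨ha, le_refl _⟩
  rw [card_erase_of_mem hmem]
  have := card_pos.mpr ⟨a, hmem⟩
  omega

lemma part_ne_move {γ δ : ℕ → ℕ} {a b n : ℕ} (ha : a ∈ Icc 1 N)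
    (hn : 1 ≤ n) (hgap : γ b + n < γ a) (hda : δ a + n = γ a) (hdb : δ b = γ b + n)
    (hoth : ∀ l, l ≠ a → l ≠ b → δ l = γ l) :
    ∃ i ∈ Icc 1 N, part N γ i ≠ part N δ i := by
  by_contra hcon
  push_neg at hcon
  have := cntGe_eq_of_part_eq hcon (γ a)
  have := cntGe_move_lt ha hn hgap hda hdb hoth
  omega

lemma sum_Icc_split (f : ℕ → ℕ) {p : ℕ} (hp : 1 ≤ p) :
    ∑ j ∈ Icc 1 p, f j = ∑ j ∈ Icc 1 (p - 1), f j + f p := by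
  have : p = (p - 1) + 1 := by omega
  rw [this, Finset.sum_Icc_succ_top (by omega)]
  simp

lemma sdom_trans {f g h : ℕ → ℕ} (h1 : sdom N f g) (h2 : sdom N g h) : sdom N f h := by
  obtain ⟨⟨i, hi, hne⟩, hs1⟩ := h1
  obtain ⟨_, hs2⟩ := h2
  refine ⟨?_, fun k hk => le_trans (hs2 k hk) (hs1 k hk)⟩
  by_contra hcon
  push_neg at hcon
  have hsum : ∀ p, p ≤ N → ∑ j ∈ Icc 1 p, h j = ∑ j ∈ Icc 1 p, f j := by
    intro p hp
    apply sum_congr rfl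
    intro x hx
    obtain ⟨hx1, hx2⟩ := mem_Icc.mp hx
    exact (hcon x (mem_Icc.mpr ⟨hx1, le_trans hx2 hp⟩)).symm
  have hgeq : ∀ p, p ≤ N → ∑ j ∈ Icc 1 p, g j = ∑ j ∈ Icc 1 p, f j := by
    intro p hp
    have := hs1 p hp
    have := hs2 p hp
    have := hsum p hp
    omega
  obtain ⟨hi1, hi2⟩ := mem_Icc.mp hi
  have e1 := hgeq i hi2
  have e2 := hgeq (i - 1) (by omega)
  have e3 := sum_Icc_split f hi1
  have e4 := sum_Icc_split g hi1
  omega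

lemma sdom_congr_right {f g g' : ℕ → ℕ} (hg : ∀ i ∈ Icc 1 N, g i = g' i)
    (h : sdom N f g) : sdom N f g' := by
  obtain ⟨⟨i, hi, hne⟩, hs⟩ := h
  constructor
  · exact ⟨i, hi, by rw [← hg i hi]; exact hne⟩
  · intro k hk
    have : ∑ j ∈ Icc 1 k, g' j = ∑ j ∈ Icc 1 k, g j := by
      apply sum_congr rfl
      intro x hx
      obtain ⟨hx1, hx2⟩ := mem_Icc.mp hx
      exact (hg x (mem_Icc.mpr ⟨hx1, le_trans hx2 hk⟩)).symm
    rw [this]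
    exact hs k hk

lemma sdom_congr_left {f f' g : ℕ → ℕ} (hf : ∀ i ∈ Icc 1 N, f i = f' i)
    (h : sdom N f g) : sdom N f' g := by
  obtain ⟨⟨i, hi, hne⟩, hs⟩ := h
  constructor
  · exact ⟨i, hi, by rw [← hf i hi]; exact hne⟩
  · intro k hk
    have : ∑ j ∈ Icc 1 k, f' j = ∑ j ∈ Icc 1 k, f j := by
      apply sum_congr rfl
      intro x hx
      obtain ⟨hx1, hx2⟩ := mem_Icc.mp hx
      exact (hf x (mem_Icc.mpr ⟨hx1, le_trans hx2 hk⟩)).symm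
    rw [this]
    exact hs k hk

lemma tri_trans {f g h : ℕ → ℕ} (h1 : tri N f g) (h2 : tri N g h) : tri N f h := by
  obtain ⟨hw1, hc1⟩ := h1
  obtain ⟨hw2, hc2⟩ := h2
  refine ⟨hw1.trans hw2, ?_⟩
  rcases hc1 with hp1 | ⟨he1, hs1⟩ <;> rcases hc2 with hp2 | ⟨he2, hs2⟩
  · exact Or.inl (sdom_trans hp1 hp2)
  · exact Or.inl (sdom_congr_right he2 hp1)
  · exact Or.inl (sdom_congr_left (fun i hi => (he1 i hi).symm) hp2)
  · exact Or.inr ⟨fun i hi => (he1 i hi).trans (he2 i hi), sdom_trans hs1 hs2⟩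
end OrderLemmas

section CountLemmas
open Finset

lemma count_mod_card (m r s : ℕ) (hm : 1 ≤ m) (hr : r < m) :
    ((Finset.Icc 1 s).filter fun i => (i - 1) % m = r).card
      = if r + 1 ≤ s then (s - r - 1) / m + 1 else 0 := by
  classical
  split_ifs with hrs
  · have hset : (Finset.Icc 1 s).filter (fun i => (i - 1) % m = r)
        = (Finset.range ((s - r - 1) / m + 1)).image (fun j => m * j + r + 1) := by
      ext i
      simp only [mem_filter, mem_Icc, mem_image, mem_range]
      constructor
      · rintro ⟨⟨hi1, hi2⟩, hmod⟩
        refine ⟨(i - 1) / m, ?_, ?_⟩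
        · have h1 : m * ((i - 1) / m) + r = i - 1 := by
            have := Nat.div_add_mod (i - 1) m
            omega
          have h2 : m * ((i - 1) / m) ≤ s - r - 1 := by omega
          have h3 : (i - 1) / m ≤ (s - r - 1) / m := by
            rw [Nat.le_div_iff_mul_le (by omega : 0 < m), Nat.mul_comm]
            omega
          omega
        · have := Nat.div_add_mod (i - 1) m
          omega
      · rintro ⟨j, hj, rfl⟩
        have hmono : m * j ≤ m * ((s - r - 1) / m) := Nat.mul_le_mul_left m (by omega)
        have hdle : m * ((s - r - 1) / m) ≤ s - r - 1 := Nat.mul_div_le _ _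
        refine ⟨⟨by omega, by omega⟩, ?_⟩
        have : m * j + r + 1 - 1 = r + m * j := by omega
        rw [this, Nat.add_mul_mod_self_left]
        exact Nat.mod_eq_of_lt hr
    rw [hset, card_image_of_injective _ (fun x y hxy => by
      have : m * x = m * y := by omega
      exact Nat.eq_of_mul_eq_mul_left (by omega) this)]
    simp
  · apply card_eq_zero.mpr
    apply filter_eq_empty_iff.mpr
    intro i hi
    obtain ⟨hi1, hi2⟩ := mem_Icc.mp hi
    have : (i - 1) % m ≤ i - 1 := Nat.mod_le _ _
    omega

lemma count_mod_self (m s : ℕ) (hm : 1 ≤ m) :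
    ((Finset.Icc 1 s).filter fun i => (i - 1) % m = s % m).card = s / m := by
  rw [count_mod_card m _ s hm (Nat.mod_lt _ (by omega))]
  have hdm := Nat.div_add_mod s m
  split_ifs with hc
  · have hq1 : 1 ≤ s / m := by
      rcases Nat.eq_zero_or_pos (s / m) with h0 | h1
      · rw [h0] at hdm; omega
      · exact h1
    have he : s - s % m - 1 = m * (s / m - 1) + (m - 1) := by
      have h5 : s / m - 1 + 1 = s / m := by omega
      have : m * (s / m) = m * (s / m - 1) + m := by
        nth_rewrite 1 [← h5]
        rw [Nat.mul_succ]
      omega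
    rw [he, Nat.mul_add_div (show 0 < m by omega), Nat.div_eq_of_lt (show m - 1 < m by omega)]
    omega
  · have h6 : s % m < m := Nat.mod_lt _ (show 0 < m by omega)
    have h7 : s < m := by omega
    rw [Nat.div_eq_of_lt h7]
 
lemma count_mod_full (m k t r : ℕ) (hm : 1 ≤ m) (ht1 : 1 ≤ t) (ht2 : t ≤ m) (hr : r < m) :
    ((Finset.Icc 1 (m * k + t)).filter fun i => (i - 1) % m = r).card
      = k + if r < t then 1 else 0 := by
  rw [count_mod_card m r _ hm hr]
  split_ifs with hc hd hd
  · -- r + 1 ≤ m*k + t and r < t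
    have he : m * k + t - r - 1 = m * k + (t - r - 1) := by omega
    rw [he, Nat.mul_add_div (show 0 < m by omega),
      Nat.div_eq_of_lt (show t - r - 1 < m by omega)]
  · -- r+1 ≤ m*k+t, r ≥ t: need k ≥ 1 then (m*k + t - r - 1)/m = k - 1
    push_neg at hd
    have hk1 : 1 ≤ k := by
      by_contra hk0
      push_neg at hk0
      interval_cases k
      · simp at hc ⊢; omega
    have he : m * k + t - r - 1 = m * (k - 1) + (m + t - r - 1) := by
      have h5 : k - 1 + 1 = k := by omega
      have : m * k = m * (k - 1) + m := by
        nth_rewrite 1 [← h5]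
        rw [Nat.mul_succ]
      omega
    rw [he, Nat.mul_add_div (show 0 < m by omega),
      Nat.div_eq_of_lt (show m + t - r - 1 < m by omega)]
    omega
  · omega
  · -- r + 1 > m*k + t, r ≥ t: then k = 0
    push_neg at hc hd
    have : k = 0 := by
      by_contra hk
      have : 1 ≤ k := by omega
      have : m ≤ m * k := Nat.le_mul_of_pos_right m (by omega)
      omega
    omega

lemma filter_Icc_succ (P : ℕ → Prop) [DecidablePred P] (s : ℕ) :
    ((Finset.Icc 1 (s + 1)).filter P).card
      = ((Finset.Icc 1 s).filter P).card + (if P (s + 1) then 1 else 0) := by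
  classical
  have : Finset.Icc 1 (s + 1) = insert (s + 1) (Finset.Icc 1 s) := by
    ext x
    simp only [Finset.mem_Icc, Finset.mem_insert]
    omega
  rw [this, Finset.filter_insert]
  split_ifs with h
  · rw [Finset.card_insert_of_notMem (fun hmem => by
      have := Finset.mem_Icc.mp (Finset.mem_of_mem_filter _ hmem)
      omega)]
  · omega

lemma count_eq_singleton (c s : ℕ) (hc : 1 ≤ c) :
    ((Finset.Icc 1 s).filter fun i => c = i).card = if c ≤ s then 1 else 0 := by
  classical
  split_ifs with h
  · have : (Finset.Icc 1 s).filter (fun i => c = i) = {c} := by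
      ext x
      simp only [Finset.mem_filter, Finset.mem_Icc, Finset.mem_singleton]
      constructor
      · rintro ⟨_, rfl⟩; rfl
      · rintro rfl; exact ⟨⟨hc, h⟩, rfl⟩
    rw [this]; rfl
  · apply Finset.card_eq_zero.mpr
    apply Finset.filter_eq_empty_iff.mpr
    intro i hi
    obtain ⟨hi1, hi2⟩ := Finset.mem_Icc.mp hi
    omega
end CountLemmas

section TildeLemmas
open Finset
variable {N : ℕ} {α : ℕ → ℕ}

lemma tilde_sub_lt_iff {x y : ℕ} (hx1 : 1 ≤ x) (hxN : x ≤ N) (hy1 : 1 ≤ y) (hyN : y ≤ N)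
    (ν : ℤ) :
    tilde N α x - (ν : ℚ) < tilde N α y ↔
      ((α x : ℤ) - ν < (α y : ℤ)) ∨ (((α x : ℤ) - ν = (α y : ℤ)) ∧ y < x) := by
  unfold tilde
  have hc : (0 : ℚ) < (N : ℚ) + 1 := by positivity
  have hxq : (x : ℚ) ≤ (N : ℚ) := by exact_mod_cast hxN
  have hyq : (y : ℚ) ≤ (N : ℚ) := by exact_mod_cast hyN
  have hx0 : (1 : ℚ) ≤ (x : ℚ) := by exact_mod_cast hx1
  have hy0 : (1 : ℚ) ≤ (y : ℚ) := by exact_mod_cast hy1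
  have hsplit : ((x : ℚ) - (y : ℚ)) / ((N : ℚ) + 1)
      = (x : ℚ) / ((N : ℚ) + 1) - (y : ℚ) / ((N : ℚ) + 1) := sub_div _ _ _
  have hmid : ((α x : ℚ) - (x : ℚ) / ((N : ℚ) + 1) - (ν : ℚ) < (α y : ℚ) - (y : ℚ) / ((N : ℚ) + 1))
      ↔ ((((α x : ℤ) - ν - (α y : ℤ) : ℤ) : ℚ) < ((x : ℚ) - (y : ℚ)) / ((N : ℚ) + 1)) := by
    rw [hsplit]
    push_cast
    constructor <;> intro h <;> linarith
  rw [hmid]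
  set d : ℤ := (α x : ℤ) - ν - (α y : ℤ) with hd
  have hlow : (-1 : ℚ) < ((x : ℚ) - (y : ℚ)) / ((N : ℚ) + 1) := by
    rw [lt_div_iff₀ hc]
    linarith
  have hhigh : ((x : ℚ) - (y : ℚ)) / ((N : ℚ) + 1) < 1 := by
    rw [div_lt_one hc]
    linarith
  constructor
  · intro h
    rcases lt_trichotomy d 0 with hd0 | hd0 | hd0
    · left; omega
    · right
      refine ⟨by omega, ?_⟩
      rw [hd0] at h
      simp only [Int.cast_zero] at h
      rw [lt_div_iff₀ hc] at h
      have : (y : ℚ) < (x : ℚ) := by linarith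
      exact_mod_cast this
    · exfalso
      have : (1 : ℚ) ≤ (d : ℚ) := by exact_mod_cast hd0
      linarith
  · intro h
    rcases h with hlt | ⟨heq, hyx⟩
    · have hd1 : d ≤ -1 := by omega
      have : (d : ℚ) ≤ -1 := by exact_mod_cast hd1
      linarith
    · have hd0 : d = 0 := by omega
      rw [hd0]
      simp only [Int.cast_zero]
      rw [lt_div_iff₀ hc]
      have : (y : ℚ) < (x : ℚ) := by exact_mod_cast hyx
      linarith

lemma tilde_lt_tilde {x y : ℕ} (hx1 : 1 ≤ x) (hxN : x ≤ N) (hy1 : 1 ≤ y) (hyN : y ≤ N)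
    (h : α y < α x ∨ (α y = α x ∧ x < y)) : tilde N α y < tilde N α x := by
  have := (tilde_sub_lt_iff (α := α) (x := y) (y := x) hy1 hyN hx1 hxN 0).mpr
  simp only [Int.cast_zero, sub_zero] at this
  apply this
  rcases h with h | ⟨h1, h2⟩
  · left; omega
  · right; exact ⟨by omega, h2⟩
end TildeLemmas

section CongrLemmas
open Finset
variable {N : ℕ}

lemma rnk_congr {f f' : ℕ → ℕ} (hf : ∀ i ∈ Icc 1 N, f i = f' i) {i : ℕ} (hi : i ∈ Icc 1 N) :
    rnk N f i = rnk N f' i := by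
  unfold rnk
  congr 1
  · congr 1
    apply filter_congr
    intro j hj
    rw [hf i hi, hf j hj]
  · congr 1
    apply filter_congr
    intro j hj
    obtain ⟨hj1, hj2⟩ := mem_Icc.mp hj
    obtain ⟨_, hi2⟩ := mem_Icc.mp hi
    rw [hf i hi, hf j (mem_Icc.mpr ⟨hj1, le_trans hj2 hi2⟩)]

lemma part_congr {f f' : ℕ → ℕ} (hf : ∀ i ∈ Icc 1 N, f i = f' i) (i : ℕ) :
    part N f i = part N f' i := by
  unfold part
  rw [filter_congr (fun j hj => by rw [rnk_congr hf hj])]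
  exact sum_congr rfl (fun j hj => hf j (mem_of_mem_filter _ hj))

lemma tri_congr {f f' g g' : ℕ → ℕ} (hf : ∀ i ∈ Icc 1 N, f i = f' i)
    (hg : ∀ i ∈ Icc 1 N, g i = g' i) (h : tri N f g) : tri N f' g' := by
  obtain ⟨hw, hc⟩ := h
  constructor
  · unfold wt at hw ⊢
    rw [← sum_congr rfl hf, ← sum_congr rfl hg]
    exact hw
  · rcases hc with hp | ⟨he, hs⟩
    · left
      exact sdom_congr_left (fun i _ => part_congr hf i)
        (sdom_congr_right (fun i _ => part_congr hg i) hp)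
    · right
      constructor
      · intro i hi
        rw [← part_congr hf i, ← part_congr hg i]
        exact he i hi
      · exact sdom_congr_left hf (sdom_congr_right hg hs)

lemma count_shift_singleton (c s m : ℕ) :
    ((Finset.Icc 1 s).filter fun i => m + i = c).card
      = if m + 1 ≤ c ∧ c ≤ m + s then 1 else 0 := by
  classical
  split_ifs with h
  · have : (Finset.Icc 1 s).filter (fun i => m + i = c) = {c - m} := by
      ext x
      simp only [Finset.mem_filter, Finset.mem_Icc, Finset.mem_singleton]
      omega
    rw [this]; rfl
  · apply Finset.card_eq_zero.mpr
    apply Finset.filter_eq_empty_iff.mpr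
    intro i hi
    obtain ⟨hi1, hi2⟩ := Finset.mem_Icc.mp hi
    omega
end CongrLemmas


/-- the chain `β⁽⁰⁾ = α, β⁽¹⁾, …, β⁽ᵀ⁾ = β` with
`β⁽ˢ⁾ = α - n Σ_{i=1}^s (ε(w((i-1) mod m + 1)) - ε(w(m+i)))` satisfies
`β⁽ˢ⁾ ▷ β⁽ˢ⁺¹⁾` for each `s < T`; consequently `α ▷ β`. -/
theorem chain_dominance (N : ℕ) (α β : ℕ → ℕ) (w : ℕ → ℕ) (m n T t k : ℕ)
    (B : ℕ → ℕ → ℕ) (ξ : ℕ → ℚ)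
    (hN : 1 ≤ N)
    (hNfull : N = len N α + wt N α)
    (hsupp : ∀ i, N < i → α i = 0)
    (hw : ∀ i, 1 ≤ i → 1 ≤ w i ∧ rnk N α (w i) = i)
    (hn1 : 1 ≤ n) (hn2 : n ≤ α (w 1))
    (hm : leg N α (w 1) (α (w 1) + 1 - n) + 1 = m)
    (hξ : ∀ k i, 1 ≤ i → i ≤ m → ξ (m * k + i) = tilde N α (w i) - (n : ℚ) * k)
    (hT1 : 1 ≤ T)
    (hT2 : ∀ s, 1 ≤ s → s < T → tilde N α (w (m + s)) < ξ (m + s + 1))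
    (hT3 : ξ (m + T + 1) < tilde N α (w (m + T)))
    (ht : t = (T - 1) % m + 1) (hk : k = (T - t) / m)
    (hβ : ∀ i, 1 ≤ i →
      (i ≤ t → (β (w i) : ℤ) = (α (w i) : ℤ) - (k + 1) * n) ∧
      (t < i → i ≤ m → (β (w i) : ℤ) = (α (w i) : ℤ) - k * n) ∧
      (m < i → i ≤ m + T → β (w i) = α (w i) + n) ∧
      (m + T < i → β (w i) = α (w i)))
    (hB : ∀ s l, s ≤ T →
      (B s l : ℤ) = (α l : ℤ) - (n : ℤ) *
        ((((Finset.Icc 1 s).filter fun i => w ((i - 1) % m + 1) = l).card : ℤ) -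
         (((Finset.Icc 1 s).filter fun i => w (m + i) = l).card : ℤ))) :
    (∀ l, B 0 l = α l) ∧
    (∀ l, 1 ≤ l → l ≤ N → B T l = β l) ∧
    (∀ s, s < T → tri N (B s) (B (s + 1))) ∧
    tri N α β := by
  classical
  have hm1 : 1 ≤ m := by omega
  have hw1 : ∀ i, 1 ≤ i → 1 ≤ w i := fun i hi => (hw i hi).1
  have hwr : ∀ i, 1 ≤ i → rnk N α (w i) = i := fun i hi => (hw i hi).2
  have hwinj : ∀ i j, 1 ≤ i → 1 ≤ j → w i = w j → i = j := by
    intro i j hi hj h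
    rw [← hwr i hi, ← hwr j hj, h]
  have hrnk_big : ∀ x, N < x → rnk N α x = x := by
    intro x hx
    have hx0 : α x = 0 := hsupp x hx
    unfold rnk
    have e1 : Finset.Icc 1 x = Finset.Icc 1 N ∪ Finset.Icc (N + 1) x := by
      ext j
      simp only [Finset.mem_Icc, Finset.mem_union]
      omega
    have hdisj : Disjoint ((Finset.Icc 1 N).filter fun j => α j = α x)
        ((Finset.Icc (N + 1) x).filter fun j => α j = α x) := by
      apply Finset.disjoint_filter_filter
      rw [Finset.disjoint_left]
      intro j hj hj'
      simp only [Finset.mem_Icc] at hj hj'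
      omega
    rw [e1, Finset.filter_union, Finset.card_union_of_disjoint hdisj]
    have e2 : (Finset.Icc (N + 1) x).filter (fun j => α j = α x) = Finset.Icc (N + 1) x := by
      apply Finset.filter_true_of_mem
      intro j hj
      obtain ⟨hj1, _⟩ := Finset.mem_Icc.mp hj
      rw [hsupp j (by omega), hx0]
    rw [e2, Nat.card_Icc]
    have e3 : ((Finset.Icc 1 N).filter fun j => α j = α x).card
        + ((Finset.Icc 1 N).filter fun j => ¬ (α j = α x)).card = N := by
      rw [Finset.card_filter_add_card_filter_not]
      simp
    have e4 : ((Finset.Icc 1 N).filter fun j => α x < α j)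
        = ((Finset.Icc 1 N).filter fun j => ¬ (α j = α x)) := by
      apply Finset.filter_congr
      intro j _
      constructor <;> intro h <;> omega
    rw [e4]
    omega
  have hwN : ∀ j, 1 ≤ j → j ≤ N → w j ≤ N := by
    intro j h1 h2
    by_contra hcon
    push_neg at hcon
    have hbig := hrnk_big (w j) hcon
    rw [hwr j h1] at hbig
    omega
  have hwmem : ∀ j, 1 ≤ j → j ≤ N → w j ∈ Finset.Icc 1 N :=
    fun j h1 h2 => Finset.mem_Icc.mpr ⟨hw1 j h1, hwN j h1 h2⟩
  have hmax : ∀ l ∈ Finset.Icc 1 N, α l ≤ α (w 1) := by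
    intro l hl
    by_contra hcon
    push_neg at hcon
    have h1 := rnk_lt_of_val_lt (hwmem 1 le_rfl hN) hl hcon
    rw [hwr 1 le_rfl] at h1
    have := rnk_ge_one (γ := α) hl
    omega
  have hmaxlt : ∀ l ∈ Finset.Icc 1 N, l < w 1 → α l < α (w 1) := by
    intro l hl hlt
    rcases Nat.lt_or_ge (α l) (α (w 1)) with h | h
    · exact h
    · exfalso
      have heq : α l = α (w 1) := le_antisymm (hmax l hl) h
      have h2 := rnk_lt_of_val_eq (γ := α) (Finset.mem_Icc.mp hl).1 hlt (hwN 1 le_rfl hN) heq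
      rw [hwr 1 le_rfl] at h2
      have := rnk_ge_one (γ := α) hl
      omega
  have htil : ∀ i j, 1 ≤ i → i < j → j ≤ N → tilde N α (w j) < tilde N α (w i) := by
    intro i j h1 h2 h3
    have hi : i ≤ N := by omega
    apply tilde_lt_tilde (hw1 i h1) (hwN i h1 hi) (hw1 j (by omega)) (hwN j (by omega) h3)
    rcases lt_trichotomy (α (w j)) (α (w i)) with h | h | h
    · exact Or.inl h
    · refine Or.inr ⟨h, ?_⟩
      rcases lt_trichotomy (w i) (w j) with hw' | hw' | hw'
      · exact hw'
      · exact absurd (hwinj i j h1 (by omega) hw') (by omega)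
      · exfalso
        have h4 := rnk_lt_of_val_eq (γ := α) (hw1 j (by omega)) hw' (hwN i h1 hi) h
        rw [hwr i h1, hwr j (by omega)] at h4
        omega
    · exfalso
      have h4 := rnk_lt_of_val_lt (γ := α) (hwmem i h1 hi) (hwmem j (by omega) h3) h
      rw [hwr i h1, hwr j (by omega)] at h4
      omega
  -- the set S of large tilde values
  have hSchar : ∀ l ∈ Finset.Icc 1 N,
      (tilde N α (w 1) - (n : ℚ) < tilde N α l ↔
        (l = w 1 ∨ (w 1 < l ∧ α (w 1) + 1 - n ≤ α l ∧ α l ≤ α (w 1)) ∨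
          (l < w 1 ∧ α (w 1) + 1 - n ≤ α l + 1 ∧ α l + 1 ≤ α (w 1)))) := by
    intro l hl
    obtain ⟨hl1, hl2⟩ := Finset.mem_Icc.mp hl
    have hiff := tilde_sub_lt_iff (α := α) (x := w 1) (y := l)
      (hw1 1 le_rfl) (hwN 1 le_rfl hN) hl1 hl2 (n : ℤ)
    have hmx := hmax l hl
    constructor
    · intro h
      have h2 := hiff.mp (by exact_mod_cast h)
      rcases Nat.lt_trichotomy l (w 1) with hc | hc | hc
      · right; right
        have hml := hmaxlt l hl hc
        rcases h2 with h3 | ⟨h3, h4⟩ <;> exact ⟨hc, by omega, by omega⟩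
      · exact Or.inl hc
      · right; left
        rcases h2 with h3 | ⟨h3, h4⟩
        · exact ⟨hc, by omega, by omega⟩
        · omega
    · intro h
      have h2 : ((α (w 1) : ℤ) - (n : ℤ) < (α l : ℤ)) ∨
          (((α (w 1) : ℤ) - (n : ℤ) = (α l : ℤ)) ∧ l < w 1) := by
        rcases h with rfl | ⟨hc, h3, h4⟩ | ⟨hc, h3, h4⟩
        · left; omega
        · left; omega
        · by_cases he : (α (w 1) : ℤ) - (n : ℤ) = (α l : ℤ)
          · exact Or.inr ⟨he, hc⟩
          · left; omega
      have h3 := hiff.mpr h2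
      exact_mod_cast h3
  have hScard : ((Finset.Icc 1 N).filter (fun l => tilde N α (w 1) - (n : ℚ) < tilde N α l)).card
      = m := by
    set A1 := (Finset.Icc 1 N).filter
      (fun l => w 1 < l ∧ α (w 1) + 1 - n ≤ α l ∧ α l ≤ α (w 1)) with hA1
    set A2 := (Finset.Icc 1 N).filter
      (fun l => l < w 1 ∧ α (w 1) + 1 - n ≤ α l + 1 ∧ α l + 1 ≤ α (w 1)) with hA2
    have hset : (Finset.Icc 1 N).filter (fun l => tilde N α (w 1) - (n : ℚ) < tilde N α l)
        = insert (w 1) (A1 ∪ A2) := by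
      ext x
      simp only [Finset.mem_filter, Finset.mem_insert, Finset.mem_union, hA1, hA2]
      constructor
      · rintro ⟨hx, h⟩
        rcases (hSchar x hx).mp h with h1 | h1 | h1
        · exact Or.inl h1
        · exact Or.inr (Or.inl ⟨hx, h1⟩)
        · exact Or.inr (Or.inr ⟨hx, h1⟩)
      · rintro (rfl | ⟨hx, h1⟩ | ⟨hx, h1⟩)
        · exact ⟨hwmem 1 le_rfl hN, (hSchar _ (hwmem 1 le_rfl hN)).mpr (Or.inl rfl)⟩
        · exact ⟨hx, (hSchar x hx).mpr (Or.inr (Or.inl h1))⟩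
        · exact ⟨hx, (hSchar x hx).mpr (Or.inr (Or.inr h1))⟩
    rw [hset]
    have hdisj : Disjoint A1 A2 := by
      rw [hA1, hA2, Finset.disjoint_filter]
      intro x _ hx hx'
      omega
    have hnotmem : w 1 ∉ A1 ∪ A2 := by
      intro hcon
      rcases Finset.mem_union.mp hcon with h1 | h1 <;>
        · simp only [hA1, hA2, Finset.mem_filter] at h1
          omega
    rw [Finset.card_insert_of_notMem hnotmem, Finset.card_union_of_disjoint hdisj]
    unfold leg at hm
    rw [hA1, hA2]
    omega
  have hlen_mem : ∀ x ∈ Finset.Icc 1 N, α x ≠ 0 → x ≤ len N α := by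
    intro x hx hx0
    exact Finset.le_sup (f := id) (Finset.mem_filter.mpr ⟨hx, hx0⟩)
  have hw1len : w 1 ≤ len N α :=
    hlen_mem (w 1) (hwmem 1 le_rfl hN) (by omega)
  have hmlen : m ≤ len N α := by
    rw [← hScard]
    have hsub : ((Finset.Icc 1 N).filter (fun l => tilde N α (w 1) - (n : ℚ) < tilde N α l))
        ⊆ Finset.Icc 1 (len N α) := by
      intro x hx
      obtain ⟨hxI, hc⟩ := Finset.mem_filter.mp hx
      obtain ⟨hx1, _⟩ := Finset.mem_Icc.mp hxI
      rcases (hSchar x hxI).mp hc with h1 | h1 | h1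
      · subst h1
        exact Finset.mem_Icc.mpr ⟨hx1, hw1len⟩
      · refine Finset.mem_Icc.mpr ⟨hx1, hlen_mem x hxI (by omega)⟩
      · refine Finset.mem_Icc.mpr ⟨hx1, by omega⟩
    have := Finset.card_le_card hsub
    rw [Nat.card_Icc] at this
    omega
  have hlenN : len N α ≤ N := by
    apply Finset.sup_le
    intro b hb
    have := Finset.mem_Icc.mp (Finset.mem_of_mem_filter _ hb)
    exact this.2
  have hTmk : T = m * k + t := by
    have h1 : t = (T - 1) % m + 1 := ht
    have h2 := Nat.div_add_mod (T - 1) m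
    have h3 : k = (T - 1) / m := by
      rw [hk, ht]
      have : T - ((T - 1) % m + 1) = m * ((T - 1) / m) := by omega
      rw [this, Nat.mul_div_cancel_left _ (by omega : 0 < m)]
    have h4 : m * k = m * ((T - 1) / m) := by rw [h3]
    omega
  have ht1 : 1 ≤ t := by omega
  have htm : t ≤ m := by
    have := Nat.mod_lt (T - 1) (show 0 < m by omega)
    omega
  have hTwt : T ≤ wt N α := by
    have hmN : m ≤ N := le_trans hmlen hlenN
    have hβval : ∀ j ∈ Finset.Icc 1 t, (α (w j) : ℤ) - (β (w j) : ℤ) = ((k + 1) * n : ℕ) := by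
      intro j hj
      obtain ⟨hj1, hj2⟩ := Finset.mem_Icc.mp hj
      have := (hβ j hj1).1 hj2
      push_cast
      omega
    have hβval2 : ∀ j ∈ Finset.Icc (t + 1) m, (α (w j) : ℤ) - (β (w j) : ℤ) = (k * n : ℕ) := by
      intro j hj
      obtain ⟨hj1, hj2⟩ := Finset.mem_Icc.mp hj
      have := (hβ j (by omega)).2.1 (by omega) hj2
      push_cast
      omega
    have hsplit : Finset.Icc 1 m = Finset.Icc 1 t ∪ Finset.Icc (t + 1) m := by
      ext x
      simp only [Finset.mem_Icc, Finset.mem_union]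
      omega
    have hdisj : Disjoint (Finset.Icc 1 t) (Finset.Icc (t + 1) m) := by
      rw [Finset.disjoint_left]
      intro x hx hx'
      simp only [Finset.mem_Icc] at hx hx'
      omega
    have hsum1 : ∑ j ∈ Finset.Icc 1 m, ((α (w j) : ℤ) - (β (w j) : ℤ)) = ((n * T : ℕ) : ℤ) := by
      rw [hsplit, Finset.sum_union hdisj, Finset.sum_congr rfl hβval,
        Finset.sum_congr rfl hβval2, Finset.sum_const, Finset.sum_const,
        Nat.card_Icc, Nat.card_Icc]
      have e1 : t + 1 - 1 = t := by omega
      have e2 : m + 1 - (t + 1) = m - t := by omega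
      rw [e1, e2]
      have e3 : ((m - t : ℕ) : ℤ) = (m : ℤ) - (t : ℤ) := by
        push_cast [htm]
        ring
      rw [hTmk]
      simp only [nsmul_eq_mul, e3]
      push_cast
      ring
    have hsum2 : ((n * T : ℕ) : ℤ) ≤ ∑ j ∈ Finset.Icc 1 m, (α (w j) : ℤ) := by
      rw [← hsum1]
      have : (0 : ℤ) ≤ ∑ j ∈ Finset.Icc 1 m, (β (w j) : ℤ) :=
        Finset.sum_nonneg (fun j _ => by positivity)
      rw [Finset.sum_sub_distrib]
      omega
    have hsum3 : ∑ j ∈ Finset.Icc 1 m, (α (w j) : ℤ)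
        = ∑ x ∈ (Finset.Icc 1 m).image w, (α x : ℤ) := by
      rw [Finset.sum_image]
      intro x hx y hy h
      exact hwinj x y (Finset.mem_Icc.mp hx).1 (Finset.mem_Icc.mp hy).1 h
    have hsub : (Finset.Icc 1 m).image w ⊆ Finset.Icc 1 N := by
      intro x hx
      obtain ⟨j, hj, rfl⟩ := Finset.mem_image.mp hx
      obtain ⟨hj1, hj2⟩ := Finset.mem_Icc.mp hj
      exact hwmem j hj1 (le_trans hj2 hmN)
    have hsum4 : ∑ x ∈ (Finset.Icc 1 m).image w, (α x : ℤ)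
        ≤ ∑ x ∈ Finset.Icc 1 N, (α x : ℤ) :=
      Finset.sum_le_sum_of_subset_of_nonneg hsub (fun x _ _ => by positivity)
    have hwtc : ((wt N α : ℕ) : ℤ) = ∑ x ∈ Finset.Icc 1 N, (α x : ℤ) := by
      unfold wt
      push_cast
      rfl
    have hfin : (n * T : ℕ) ≤ wt N α := by
      have : ((n * T : ℕ) : ℤ) ≤ ((wt N α : ℕ) : ℤ) := by
        rw [hwtc]
        exact le_trans hsum2 (le_trans (le_of_eq hsum3) hsum4)
      exact_mod_cast this
    have : T ≤ n * T := Nat.le_mul_of_pos_left T (by omega)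
    omega
  have hmTN : m + T ≤ N := by
    have h9 : m + T ≤ len N α + wt N α := Nat.add_le_add hmlen hTwt
    omega
  have hrank_iff : ∀ l ∈ Finset.Icc 1 N,
      (rnk N α l ≤ m ↔ tilde N α (w 1) - (n : ℚ) < tilde N α l) := by
    have hmN : m ≤ N := le_trans hmlen hlenN
    have hdc : ∀ l ∈ Finset.Icc 1 N, (tilde N α (w 1) - (n : ℚ) < tilde N α l) → rnk N α l ≤ m := by
      intro l hl hS
      have hsubR : ((Finset.Icc 1 N).filter (fun x => rnk N α x ≤ rnk N α l))
          ⊆ (Finset.Icc 1 N).filter (fun x => tilde N α (w 1) - (n : ℚ) < tilde N α x) := by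
        intro x hx
        obtain ⟨hxI, hxr⟩ := Finset.mem_filter.mp hx
        apply Finset.mem_filter.mpr
        refine ⟨hxI, ?_⟩
        rcases lt_or_eq_of_le hxr with hlt | heq
        · have hgt : tilde N α l < tilde N α x := by
            obtain ⟨hx1, hx2⟩ := Finset.mem_Icc.mp hxI
            obtain ⟨hl1, hl2⟩ := Finset.mem_Icc.mp hl
            apply tilde_lt_tilde hx1 hx2 hl1 hl2
            rcases Nat.lt_trichotomy (α l) (α x) with hv | hv | hv
            · exact Or.inl hv
            · refine Or.inr ⟨hv, ?_⟩
              rcases Nat.lt_trichotomy x l with hp | hp | hp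
              · exact hp
              · exact absurd hp (by intro h; subst h; omega)
              · exfalso
                have := rnk_lt_of_val_eq (γ := α) hl1 hp hx2 hv
                omega
            · exfalso
              have := rnk_lt_of_val_lt (γ := α) hxI hl hv
              omega
          linarith
        · have := rnk_injOn hxI hl heq
          subst this
          exact hS
      have hcardR := card_top (γ := α) (p := rnk N α l) (rnk_le_N hl)
      have := Finset.card_le_card hsubR
      rw [hcardR, hScard] at this
      exact this
    intro l hl
    constructor
    · intro hrl
      have hsubS : ((Finset.Icc 1 N).filter (fun x => tilde N α (w 1) - (n : ℚ) < tilde N α x))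
          ⊆ (Finset.Icc 1 N).filter (fun x => rnk N α x ≤ m) := by
        intro x hx
        obtain ⟨hxI, hxc⟩ := Finset.mem_filter.mp hx
        exact Finset.mem_filter.mpr ⟨hxI, hdc x hxI hxc⟩
      have hcardR := card_top (γ := α) (p := m) hmN
      have heq : ((Finset.Icc 1 N).filter (fun x => tilde N α (w 1) - (n : ℚ) < tilde N α x))
          = (Finset.Icc 1 N).filter (fun x => rnk N α x ≤ m) := by
        apply Finset.eq_of_subset_of_card_le hsubS
        rw [hcardR, hScard]
      have hmem : l ∈ (Finset.Icc 1 N).filter (fun x => rnk N α x ≤ m) :=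
        Finset.mem_filter.mpr ⟨hl, hrl⟩
      rw [← heq] at hmem
      exact (Finset.mem_filter.mp hmem).2
    · exact hdc l hl
  have hxi0 : ∀ j, m < j → j ≤ N → tilde N α (w j) ≤ tilde N α (w 1) - (n : ℚ) := by
    intro j hj1 hj2
    by_contra hcon
    push_neg at hcon
    have := (hrank_iff (w j) (hwmem j (by omega) hj2)).mpr hcon
    rw [hwr j (by omega)] at this
    omega
  -- the chain inequality
  have hxi : ∀ s, s < T → tilde N α (w (m + s + 1)) ≤ ξ (m + s + 1) := by
    intro s hs
    rcases Nat.eq_zero_or_pos s with rfl | hs1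
    · have e0 : m + 0 + 1 = m + 1 := by omega
      rw [e0]
      have h1 := hξ 1 1 le_rfl hm1
      have h2 : m * 1 + 1 = m + 1 := by ring
      rw [h2] at h1
      rw [h1]
      push_cast
      have := hxi0 (m + 1) (by omega) (by omega)
      linarith
    · have h1 := hT2 s hs1 hs
      have h2 := htil (m + s) (m + s + 1) (by omega) (by omega) (by omega)
      linarith
  have hxiv : ∀ s, s < T → ξ (m + s + 1)
      = tilde N α (w (s % m + 1)) - ((n * (s / m + 1) : ℕ) : ℚ) := by
    intro s hs
    have ha1 : 1 ≤ s % m + 1 := by omega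
    have ham : s % m + 1 ≤ m := by
      have := Nat.mod_lt s (show 0 < m by omega)
      omega
    have heq : m * (s / m + 1) + (s % m + 1) = m + s + 1 := by
      have := Nat.div_add_mod s m
      have h5 : m * (s / m + 1) = m * (s / m) + m := by ring
      omega
    have := hξ (s / m + 1) (s % m + 1) ha1 ham
    rw [heq] at this
    rw [this]
    push_cast
    ring
  -- key step inequality
  have hkey : ∀ s, s < T →
      ((α (w (m + s + 1)) : ℤ) < (α (w (s % m + 1)) : ℤ) - ((n * (s / m + 1) : ℕ) : ℤ)) ∨
      ((α (w (m + s + 1)) : ℤ) = (α (w (s % m + 1)) : ℤ) - ((n * (s / m + 1) : ℕ) : ℤ) ∧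
        w (s % m + 1) < w (m + s + 1)) := by
    intro s hs
    have ha1 : 1 ≤ s % m + 1 := by omega
    have ham : s % m + 1 ≤ m := by
      have := Nat.mod_lt s (show 0 < m by omega)
      omega
    have hb1 : 1 ≤ m + s + 1 := by omega
    have hbN : m + s + 1 ≤ N := by omega
    have h1 := hxi s hs
    rw [hxiv s hs] at h1
    have h2 := (tilde_sub_lt_iff (α := α) (x := w (s % m + 1)) (y := w (m + s + 1))
      (hw1 _ ha1) (hwN _ ha1 (by omega)) (hw1 _ hb1) (hwN _ hb1 hbN)
      ((n * (s / m + 1) : ℕ) : ℤ))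
    have h3 : ¬ (tilde N α (w (s % m + 1)) - ((((n * (s / m + 1) : ℕ) : ℤ) : ℤ) : ℚ)
        < tilde N α (w (m + s + 1))) := by
      push_neg
      exact_mod_cast h1
    rw [h2] at h3
    push_neg at h3
    obtain ⟨h4, h5⟩ := h3
    rcases lt_or_eq_of_le h4 with h6 | h6
    · exact Or.inl h6
    · right
      refine ⟨h6, ?_⟩
      have hne : w (s % m + 1) ≠ w (m + s + 1) := by
        intro hcon
        have := hwinj _ _ ha1 hb1 hcon
        omega
      have := h5 h6.symm
      omega
  -- count computations for B
  have hcount1 : ∀ s j, 1 ≤ j → s ≤ T →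
      ((Finset.Icc 1 s).filter fun i => w ((i - 1) % m + 1) = w j).card
      = ((Finset.Icc 1 s).filter fun i => (i - 1) % m + 1 = j).card := by
    intro s j hj _
    congr 1
    apply Finset.filter_congr
    intro i _
    constructor
    · intro h
      exact hwinj _ _ (by omega) hj h
    · intro h
      rw [h]
  have hcount2 : ∀ s j, 1 ≤ j → s ≤ T →
      ((Finset.Icc 1 s).filter fun i => w (m + i) = w j).card
      = ((Finset.Icc 1 s).filter fun i => m + i = j).card := by
    intro s j hj _
    congr 1
    apply Finset.filter_congr
    intro i _
    constructor
    · intro h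
      exact hwinj _ _ (by omega) hj h
    · intro h
      rw [h]
  have hBw : ∀ s j, s ≤ T → 1 ≤ j →
      (B s (w j) : ℤ) = (α (w j) : ℤ) - (n : ℤ) *
        ((((Finset.Icc 1 s).filter fun i => (i - 1) % m + 1 = j).card : ℤ) -
         (((Finset.Icc 1 s).filter fun i => m + i = j).card : ℤ)) := by
    intro s j hsT hj
    rw [hB s (w j) hsT, hcount1 s j hj hsT, hcount2 s j hj hsT]
  have hc1m : ∀ s j, 1 ≤ j → j ≤ m →
      ((Finset.Icc 1 s).filter fun i => (i - 1) % m + 1 = j).card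
      = ((Finset.Icc 1 s).filter fun i => (i - 1) % m = j - 1).card := by
    intro s j h1 h2
    congr 1
    apply Finset.filter_congr
    intro i _
    constructor <;> intro h <;> omega
  have hc1big : ∀ s j, m < j →
      ((Finset.Icc 1 s).filter fun i => (i - 1) % m + 1 = j).card = 0 := by
    intro s j hjm
    apply Finset.card_eq_zero.mpr
    apply Finset.filter_eq_empty_iff.mpr
    intro i _
    have := Nat.mod_lt (i - 1) (show 0 < m by omega)
    omega
  have hgoal1 : ∀ l, B 0 l = α l := by
    intro l
    have h1 := hB 0 l (by omega)
    simp [show Finset.Icc 1 0 = ∅ from rfl] at h1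
    exact_mod_cast h1
  have hgoal2 : ∀ l, 1 ≤ l → l ≤ N → B T l = β l := by
    intro l h1 h2
    have hl : l ∈ Finset.Icc 1 N := Finset.mem_Icc.mpr ⟨h1, h2⟩
    have hj1 : 1 ≤ rnk N α l := rnk_ge_one hl
    have hjN : rnk N α l ≤ N := rnk_le_N hl
    set j := rnk N α l with hj
    have hwj : w j = l := by
      apply rnk_injOn (hwmem j hj1 hjN) hl
      rw [hwr j hj1]
    rw [← hwj]
    have hBT := hBw T j le_rfl hj1
    have hcB := count_shift_singleton j T m
    obtain ⟨c1, c2, c3, c4⟩ := hβ j hj1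
    have hfin : (B T (w j) : ℤ) = (β (w j) : ℤ) := by
      by_cases hjm : j ≤ m
      · have hcA : ((Finset.Icc 1 T).filter fun i => (i - 1) % m + 1 = j).card
            = k + if j - 1 < t then 1 else 0 := by
          rw [hc1m T j hj1 hjm]
          have hcf := count_mod_full m k t (j - 1) hm1 ht1 htm (by omega)
          rw [← hTmk] at hcf
          exact hcf
        have hcB' : ((Finset.Icc 1 T).filter fun i => m + i = j).card = 0 := by
          rw [hcB, if_neg]
          omega
        rw [hcA, hcB'] at hBT
        by_cases hjt : j ≤ t
        · rw [hBT, c1 hjt, if_pos (by omega : j - 1 < t)]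
          push_cast
          ring
        · rw [hBT, c2 (by omega) hjm, if_neg (by omega : ¬ j - 1 < t)]
          push_cast
          ring
      · have hcA : ((Finset.Icc 1 T).filter fun i => (i - 1) % m + 1 = j).card = 0 :=
          hc1big T j (by omega)
        rw [hcA, hcB] at hBT
        by_cases hjT : j ≤ m + T
        · rw [hBT, c3 (by omega) hjT, if_pos (by omega)]
          push_cast
          ring
        · rw [hBT, c4 (by omega), if_neg (by omega)]
          push_cast
          ring
    exact_mod_cast hfin
  have hgoal3 : ∀ s, s < T → tri N (B s) (B (s + 1)) := by
    intro s hs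
    have hsT : s ≤ T := by omega
    have hs1T : s + 1 ≤ T := by omega
    have hmod : s % m < m := Nat.mod_lt s (by omega)
    set a := s % m + 1 with hadef
    set b := m + s + 1 with hbdef
    have ha1 : 1 ≤ a := by omega
    have ham : a ≤ m := by omega
    have hb1 : 1 ≤ b := by omega
    have hbN : b ≤ N := by omega
    have hwamem : w a ∈ Finset.Icc 1 N := hwmem a ha1 (by omega)
    have hwbmem : w b ∈ Finset.Icc 1 N := hwmem b hb1 hbN
    have hwab : w a ≠ w b := fun h => by
      have := hwinj a b ha1 hb1 h
      omega
    have hBsa : (B s (w a) : ℤ) = (α (w a) : ℤ) - (n : ℤ) * ((s / m : ℕ) : ℤ) := by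
      have h1 := hBw s a hsT ha1
      have hcA : ((Finset.Icc 1 s).filter fun i => (i - 1) % m + 1 = a).card = s / m := by
        rw [hc1m s a ha1 ham]
        have he : a - 1 = s % m := by omega
        rw [he]
        exact count_mod_self m s hm1
      have hcB : ((Finset.Icc 1 s).filter fun i => m + i = a).card = 0 := by
        rw [count_shift_singleton a s m, if_neg (by omega)]
      rw [hcA, hcB] at h1
      rw [h1]
      push_cast
      ring
    have hBsb : (B s (w b) : ℤ) = (α (w b) : ℤ) := by
      have h1 := hBw s b hsT hb1
      have hcA : ((Finset.Icc 1 s).filter fun i => (i - 1) % m + 1 = b).card = 0 :=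
        hc1big s b (by omega)
      have hcB : ((Finset.Icc 1 s).filter fun i => m + i = b).card = 0 := by
        rw [count_shift_singleton b s m, if_neg (by omega)]
      rw [hcA, hcB] at h1
      rw [h1]
      push_cast
      ring
    have hstep : ∀ l, (B (s + 1) l : ℤ) = (B s l : ℤ)
        - (n : ℤ) * ((if w a = l then (1:ℤ) else 0) - (if w b = l then (1:ℤ) else 0)) := by
      intro l
      have h1 := hB s l hsT
      have h2 := hB (s + 1) l hs1T
      have e1 : ((Finset.Icc 1 (s+1)).filter fun i => w ((i - 1) % m + 1) = l).card
          = ((Finset.Icc 1 s).filter fun i => w ((i - 1) % m + 1) = l).card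
            + (if w ((s + 1 - 1) % m + 1) = l then 1 else 0) :=
        filter_Icc_succ _ s
      have e2 : ((Finset.Icc 1 (s+1)).filter fun i => w (m + i) = l).card
          = ((Finset.Icc 1 s).filter fun i => w (m + i) = l).card
            + (if w (m + (s + 1)) = l then 1 else 0) :=
        filter_Icc_succ _ s
      have e1' : (s + 1 - 1) % m + 1 = a := by rw [Nat.add_sub_cancel]
      have e2' : m + (s + 1) = b := by omega
      rw [e1'] at e1
      rw [e2'] at e2
      rw [h2, e1, e2, h1]
      by_cases hal : w a = l <;> by_cases hbl : w b = l <;>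
        simp only [hal, hbl, if_pos, if_neg, if_true, if_false] <;>
        push_cast <;> ring
    have hda : (B (s+1) (w a) : ℤ) = (B s (w a) : ℤ) - n := by
      rw [hstep (w a), if_pos rfl, if_neg (fun h => hwab h.symm)]
      ring
    have hdb : (B (s+1) (w b) : ℤ) = (B s (w b) : ℤ) + n := by
      rw [hstep (w b), if_neg hwab, if_pos rfl]
      ring
    have hoth : ∀ l, l ≠ w a → l ≠ w b → B (s + 1) l = B s l := by
      intro l hla hlb
      have h1 := hstep l
      rw [if_neg (fun h => hla h.symm), if_neg (fun h => hlb h.symm)] at h1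
      simp at h1
      exact_mod_cast h1
    have hk2 := hkey s hs
    have hnq : (n * (s / m + 1) : ℕ) = n * (s / m) + n := by ring
    have hgap : B s (w b) + n ≤ B s (w a) := by
      have hz : (B s (w b) : ℤ) + n ≤ B s (w a) := by
        rcases hk2 with h | ⟨h, _⟩ <;>
          · rw [hnq, Nat.cast_add, Nat.cast_mul] at h
            linarith [hBsa, hBsb]
      exact_mod_cast hz
    have hda' : B (s+1) (w a) + n = B s (w a) := by omega
    have hdb' : B (s+1) (w b) = B s (w b) + n := by omega
    have hwt : wt N (B s) = wt N (B (s + 1)) := by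
      have hsm := sum_move hwab hda' hdb' hoth (Finset.Icc 1 N)
      rw [if_pos hwamem, if_pos hwbmem] at hsm
      unfold wt
      omega
    by_cases heq : B s (w a) = B s (w b) + n
    · -- swap case
      have hvab : w a < w b := by
        rcases hk2 with h | ⟨h, hlt⟩
        · exfalso
          have he' : (B s (w a) : ℤ) = (B s (w b) : ℤ) + n := by exact_mod_cast heq
          rw [hnq, Nat.cast_add, Nat.cast_mul] at h
          linarith [hBsa, hBsb]
        · exact hlt
      have hsa : B (s+1) (w a) = B s (w b) := by omega
      have hsb : B (s+1) (w b) = B s (w a) := by omega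
      refine ⟨hwt, Or.inr ⟨?_, ?_⟩⟩
      · intro i hi
        exact part_eq_of_cntGe
          (fun v => (cntGe_swap hwamem hwbmem hsa hsb (fun l hla hlb => hoth l hla hlb) v).symm) hi
      · refine ⟨⟨w a, hwamem, by omega⟩, ?_⟩
        intro p hp
        have hsm := sum_move hwab hda' hdb' hoth (Finset.Icc 1 p)
        by_cases hbp : w b ∈ Finset.Icc 1 p
        · have hap : w a ∈ Finset.Icc 1 p := by
            simp only [Finset.mem_Icc] at hbp ⊢
            exact ⟨hw1 a ha1, by omega⟩
          rw [if_pos hap, if_pos hbp] at hsm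
          omega
        · rw [if_neg hbp] at hsm
          by_cases hap2 : w a ∈ Finset.Icc 1 p
          · rw [if_pos hap2] at hsm
            omega
          · rw [if_neg hap2] at hsm
            omega
    · -- strict case
      have hgt : B s (w b) + n < B s (w a) := by omega
      refine ⟨hwt, Or.inl ⟨?_, ?_⟩⟩
      · exact part_ne_move hwamem hn1 hgt hda' hdb'
          (fun l hla hlb => hoth l hla hlb)
      · intro p hp
        exact move_topsum_le hwamem hwbmem hwab hgap hda' hdb'
          (fun l hla hlb => hoth l hla hlb) hp
  refine ⟨hgoal1, hgoal2, hgoal3, ?_⟩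
  have hchain : ∀ s, s < T → tri N (B 0) (B (s + 1)) := by
    intro s
    induction s with
    | zero => exact fun h => hgoal3 0 h
    | succ p ih =>
      intro h
      exact tri_trans (ih (by omega)) (hgoal3 (p + 1) h)
  have h0 := hchain (T - 1) (by omega)
  rw [show T - 1 + 1 = T by omega] at h0
  exact tri_congr (fun i _ => hgoal1 i)
    (fun i hi => by
      obtain ⟨h1, h2⟩ := Finset.mem_Icc.mp hi
      exact hgoal2 i h1 h2) h0
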